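/- If an element x of an abelian group satisfies n₀·(q^{k(n+1-k)} − 1)·x = 0 for all k with 1 ≤ k ≤ n, and n is odd, then n₀·(q−1)·x = 0. -/

import Mathlib

theorem stmt1 {A : Type*} [AddCommGroup A] (x : A) (n₀ q n : ℕ)
    (hn₀ : 1 ≤ n₀) (hq : 2 ≤ q) (hn : 1 ≤ n) (hodd : Odd n)
    (h : ∀ k, 1 ≤ k → k ≤ n → (n₀ * (q ^ (k * (n + 1 - k)) - 1)) • x = 0) :
    (n₀ * (q - 1)) • x = 0 := by
  rcases eq_or_lt_of_le hn with heq | hlt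
  · have h1 := h 1 le_rfl hn
    rw [← heq] at h1
    simpa using h1
  -- n ≥ 2, and n odd so n ≥ 3
  have hn2 : 2 ≤ n := hlt
  -- k = 1 gives n₀ (q^n - 1) • x = 0
  have h1 := h 1 le_rfl hn
  have e1 : 1 * (n + 1 - 1) = n := by omega
  rw [e1] at h1
  -- k = 2 gives n₀ (q^(2(n-1)) - 1) • x = 0
  have h2 := h 2 (by omega) hn2
  have e2 : 2 * (n + 1 - 2) = 2 * (n - 1) := by omega
  rw [e2] at h2
  -- pass to additive order
  set d := addOrderOf x with hd
  have hd1 : d ∣ n₀ * (q ^ n - 1) := addOrderOf_dvd_of_nsmul_eq_zero h1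
  have hd2 : d ∣ n₀ * (q ^ (2 * (n - 1)) - 1) := addOrderOf_dvd_of_nsmul_eq_zero h2
  -- coprimality: gcd(n, 2(n-1)) = 1 since n odd
  have hcop : Nat.Coprime n (2 * (n - 1)) := by
    apply Nat.Coprime.mul_right (hodd.coprime_two_left.symm)
    have : n = (n - 1) + 1 := by omega
    rw [this]
    have h2 := Nat.coprime_add_mul_left_left 1 (n - 1) 1
    simpa [Nat.add_comm] using h2.mpr (Nat.coprime_one_left _)
  -- Bezout: ∃ a, n * a % (2*(n-1)) = 1
  obtain ⟨a, -, ha⟩ := Nat.exists_mul_mod_eq_one_of_coprime hcop (by omega)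
  set m := 2 * (n - 1) with hm
  have hc : n * a = m * (n * a / m) + 1 := by
    conv_lhs => rw [← Nat.div_add_mod (n * a) m, ha]
  set c := n * a / m with hcdef
  -- move to ℤ
  have hq1 : (1 : ℕ) ≤ q := by omega
  have cast1 : ((q ^ n - 1 : ℕ) : ℤ) = (q : ℤ) ^ n - 1 := by
    push_cast [Nat.one_le_pow _ _ (by omega : 0 < q)]; ring
  have cast2 : ((q ^ m - 1 : ℕ) : ℤ) = (q : ℤ) ^ m - 1 := by
    push_cast [Nat.one_le_pow _ _ (by omega : 0 < q)]; ring
  have zd1 : (d : ℤ) ∣ (n₀ : ℤ) * ((q : ℤ) ^ n - 1) := by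
    rw [← cast1]; exact_mod_cast Int.natCast_dvd_natCast.mpr hd1
  have zd2 : (d : ℤ) ∣ (n₀ : ℤ) * ((q : ℤ) ^ m - 1) := by
    rw [← cast2]; exact_mod_cast Int.natCast_dvd_natCast.mpr hd2
  -- d ∣ n₀ (q^(n*a) - 1) since q^n - 1 ∣ q^(n*a) - 1
  have zda : (d : ℤ) ∣ (n₀ : ℤ) * ((q : ℤ) ^ (n * a) - 1) :=
    zd1.trans (mul_dvd_mul_left _ (pow_one_sub_dvd_pow_mul_sub_one _ n a))
  -- d ∣ n₀ * q * (q^(m*c) - 1)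
  have zdb : (d : ℤ) ∣ (n₀ : ℤ) * ((q : ℤ) * ((q : ℤ) ^ (m * c) - 1)) :=
    zd2.trans (mul_dvd_mul_left _ (Dvd.dvd.mul_left (pow_one_sub_dvd_pow_mul_sub_one _ m c) _))
  -- q^(n*a) - 1 = q * (q^(m*c) - 1) + (q - 1)
  have key : (n₀ : ℤ) * ((q : ℤ) ^ (n * a) - 1)
      = (n₀ : ℤ) * ((q : ℤ) * ((q : ℤ) ^ (m * c) - 1)) + (n₀ : ℤ) * ((q : ℤ) - 1) := by
    rw [hc, pow_add, pow_one]; ring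
  have zdq : (d : ℤ) ∣ (n₀ : ℤ) * ((q : ℤ) - 1) := by
    have := zda.sub zdb
    rw [key] at this
    simpa using this
  -- back to ℕ
  have castq : ((n₀ * (q - 1) : ℕ) : ℤ) = (n₀ : ℤ) * ((q : ℤ) - 1) := by
    push_cast [hq1]; ring
  have hdn : d ∣ n₀ * (q - 1) := by
    rw [← Int.natCast_dvd_natCast, castq]; exact zdq
  exact addOrderOf_dvd_iff_nsmul_eq_zero.mp hdn
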